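/- Let q ≥ 2 be a prime power, m > 1, and 1 ≤ r_1 < r_2 < ... < r_h < m. Then ∑_{i=0}^{m-1} ⌈(q−1)(q^{m−1} − ∑_{j=1}^h q^{r_j−1})/q^i⌉ = q^m − ∑_{j=1}^h q^{r_j} + h − 1, provided ∑_{j=1}^h q^{r_j} < q^{m-1}·(q-1)·q/(q-1) in the sense that the distance (q−1)(q^{m−1} − ∑ q^{r_j−1}) is positive. -/

import Mathlib

private lemma geom_pow (q : ℕ) (hq : 1 ≤ q) (n : ℕ) :
    (q - 1) * ∑ t ∈ Finset.range n, q ^ t + 1 = q ^ n := by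
  induction n with
  | zero => simp
  | succ n ih =>
    rw [Finset.sum_range_succ, Nat.mul_add]
    have h2 : (q - 1) * q ^ n + q ^ n = q ^ (n + 1) := by
      have h3 : (q - 1) * q ^ n + q ^ n = ((q - 1) + 1) * q ^ n := by ring
      rw [h3, Nat.sub_add_cancel hq, pow_succ, Nat.mul_comm]
    omega

theorem stmt_6 (q m h : ℕ) (hq : IsPrimePow q) (hm : 1 < m)
    (r : Fin h → ℕ) (hmono : StrictMono r) (hr1 : ∀ j, 1 ≤ r j) (hrm : ∀ j, r j < m)
    (hpos : 0 < (q - 1) * (q ^ (m - 1) - ∑ j, q ^ (r j - 1))) :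
    ∑ i ∈ Finset.range m,
        ((q - 1) * (q ^ (m - 1) - ∑ j, q ^ (r j - 1)) + q ^ i - 1) / q ^ i
      = q ^ m - (∑ j, q ^ (r j)) + h - 1 := by
  have hq2 : 2 ≤ q := hq.two_le
  set S := ∑ j, q ^ (r j - 1) with hSdef
  have hS : S < q ^ (m - 1) := by
    by_contra hc
    push_neg at hc
    rw [Nat.sub_eq_zero_of_le hc] at hpos
    simp at hpos
  set N := q ^ (m - 1) - S with hNdef
  have hN : S + N = q ^ (m - 1) := by omega
  have hN1 : 1 ≤ N := by omega
  set H : ℕ → ℕ :=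
    fun i => ∑ j ∈ Finset.univ.filter (fun j => i < r j), q ^ (r j - 1 - i) with hHdef
  -- the high part of S
  have hhigh : ∀ i, (∑ j ∈ Finset.univ.filter (fun j => i < r j), q ^ (r j - 1))
      = q ^ i * H i := by
    intro i
    rw [hHdef, Finset.mul_sum]
    refine Finset.sum_congr rfl ?_
    intro j hj
    simp only [Finset.mem_filter] at hj
    rw [← pow_add]
    congr 1
    have := hr1 j
    omega
  have hHS : ∀ i, q ^ i * H i ≤ S := by
    intro i
    rw [← hhigh, hSdef]
    exact Finset.sum_le_sum_of_subset (Finset.filter_subset _ _)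
  have hHbound : ∀ i, i < m → H i < q ^ (m - 1 - i) := by
    intro i hi
    have h1 : q ^ i * H i < q ^ i * q ^ (m - 1 - i) := by
      rw [← pow_add]
      have : i + (m - 1 - i) = m - 1 := by omega
      rw [this]
      exact lt_of_le_of_lt (hHS i) hS
    exact lt_of_mul_lt_mul_left h1 (Nat.zero_le _)
  -- the key per-term computation
  have key : ∀ i ∈ Finset.range m,
      ((q - 1) * N + q ^ i - 1) / q ^ i = (q - 1) * (q ^ (m - 1 - i) - H i) := by
    intro i hi
    rw [Finset.mem_range] at hi
    set Lo := ∑ j ∈ Finset.univ.filter (fun j => ¬ i < r j), q ^ (r j - 1) with hLodef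
    have hsplit : q ^ i * H i + Lo = S := by
      rw [← hhigh, hLodef, hSdef]
      exact Finset.sum_filter_add_sum_filter_not _ _ _
    set D := q ^ (m - 1 - i) - H i with hDdef
    have hD : H i + D = q ^ (m - 1 - i) := by
      have := hHbound i hi
      omega
    have hD1 : 1 ≤ D := by
      have := hHbound i hi
      omega
    have hqiD : q ^ i * D = Lo + N := by
      have e1 : q ^ i * H i + q ^ i * D = q ^ (m - 1) := by
        rw [← Nat.mul_add, hD, ← pow_add]
        congr 1
        omega
      omega
    -- bound on Lo
    have hLobound : (q - 1) * Lo + 1 ≤ q ^ i := by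
      have him : Lo ≤ ∑ t ∈ Finset.range i, q ^ t := by
        have hinj : ∀ j ∈ Finset.univ.filter (fun j => ¬ i < r j),
            ∀ k ∈ Finset.univ.filter (fun j => ¬ i < r j),
            r j - 1 = r k - 1 → j = k := by
          intro j _ k _ hjk
          apply hmono.injective
          have := hr1 j; have := hr1 k
          omega
        have himg : Lo = ∑ t ∈ (Finset.univ.filter (fun j => ¬ i < r j)).image
            (fun j => r j - 1), q ^ t := by
          rw [hLodef, Finset.sum_image hinj]
        rw [himg]
        apply Finset.sum_le_sum_of_subset
        intro t ht
        simp only [Finset.mem_image, Finset.mem_filter] at ht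
        obtain ⟨j, ⟨_, hj⟩, rfl⟩ := ht
        rw [Finset.mem_range]
        have := hr1 j
        omega
      calc (q - 1) * Lo + 1 ≤ (q - 1) * ∑ t ∈ Finset.range i, q ^ t + 1 := by
            have := Nat.mul_le_mul_left (q - 1) him
            omega
        _ = q ^ i := geom_pow q (by omega) i
    -- the ceiling computation
    have hC : q ^ i * ((q - 1) * D) = (q - 1) * N + (q - 1) * Lo := by
      calc q ^ i * ((q - 1) * D) = (q - 1) * (q ^ i * D) := by ring
        _ = (q - 1) * (Lo + N) := by rw [hqiD]
        _ = (q - 1) * N + (q - 1) * Lo := by ring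
    have hd1 : 1 ≤ (q - 1) * N := Nat.mul_pos (by omega) hN1
    have heq : (q - 1) * N + q ^ i - 1
        = q ^ i * ((q - 1) * D) + (q ^ i - 1 - (q - 1) * Lo) := by omega
    rw [heq, Nat.mul_add_div (Nat.pow_pos (by omega) : 0 < q ^ i),
      Nat.div_eq_of_lt (by omega), Nat.add_zero]
  rw [Finset.sum_congr rfl key]
  -- now sum up
  set T := ∑ j, q ^ (r j) with hTdef
  have hTh : h ≤ T := by
    have : ∑ _j : Fin h, 1 ≤ T := by
      apply Finset.sum_le_sum
      intro j _
      exact Nat.one_le_pow _ _ (by omega)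
    simpa using this
  have hTS : T = q * S := by
    rw [hTdef, hSdef, Finset.mul_sum]
    refine Finset.sum_congr rfl ?_
    intro j _
    have := hr1 j
    calc q ^ (r j) = q ^ (1 + (r j - 1)) := by congr 1; omega
      _ = q * q ^ (r j - 1) := by rw [pow_add, pow_one]
  have hTbound : T + q ≤ q ^ m := by
    have h1 : q * S + q * 1 ≤ q * q ^ (m - 1) := by
      rw [← Nat.mul_add]
      exact Nat.mul_le_mul_left q (by omega)
    have h2 : q * q ^ (m - 1) = q ^ m := by
      rw [← pow_succ']
      congr 1
      omega
    omega
  -- sum of H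
  have hsumH : (q - 1) * (∑ i ∈ Finset.range m, H i) + h = T := by
    have hswap : ∑ i ∈ Finset.range m, H i
        = ∑ j, ∑ t ∈ Finset.range (r j), q ^ t := by
      rw [hHdef]
      simp only [Finset.sum_filter]
      rw [Finset.sum_comm]
      refine Finset.sum_congr rfl ?_
      intro j _
      rw [← Finset.sum_filter]
      have hfil : (Finset.range m).filter (fun i => i < r j) = Finset.range (r j) := by
        ext x
        simp only [Finset.mem_filter, Finset.mem_range]
        have := hrm j
        omega
      rw [hfil, Finset.sum_range_reflect]
    rw [hswap, Finset.mul_sum, hTdef]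
    calc (∑ j, (q - 1) * ∑ t ∈ Finset.range (r j), q ^ t) + h
        = ∑ j : Fin h, ((q - 1) * ∑ t ∈ Finset.range (r j), q ^ t + 1) := by
          rw [Finset.sum_add_distrib]
          simp
      _ = ∑ j, q ^ r j := by
          refine Finset.sum_congr rfl ?_
          intro j _
          exact geom_pow q (by omega) (r j)
  -- main summation identity
  have hmain : (∑ i ∈ Finset.range m, (q - 1) * (q ^ (m - 1 - i) - H i))
      + (q - 1) * (∑ i ∈ Finset.range m, H i) + 1 = q ^ m := by
    rw [Finset.mul_sum, ← Finset.sum_add_distrib]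
    have e1 : ∑ i ∈ Finset.range m, ((q - 1) * (q ^ (m - 1 - i) - H i) + (q - 1) * H i)
        = ∑ i ∈ Finset.range m, (q - 1) * q ^ (m - 1 - i) := by
      refine Finset.sum_congr rfl ?_
      intro i hi
      rw [Finset.mem_range] at hi
      rw [← Nat.mul_add, Nat.sub_add_cancel (hHbound i hi).le]
    rw [e1]
    have e2 : ∑ i ∈ Finset.range m, (q - 1) * q ^ (m - 1 - i)
        = (q - 1) * ∑ t ∈ Finset.range m, q ^ t := by
      rw [Finset.mul_sum]
      exact Finset.sum_range_reflect (fun t => (q - 1) * q ^ t) m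
    rw [e2]
    exact geom_pow q (by omega) m
  omega
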